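/- arXiv:1210.7677 — 2 statements merged into one kernel-verified Lean document; each statement's English description precedes it below -/
import Mathlib

section
/- Let H be an n×n Hermitian matrix and let v be a unit vector such that Hv = λv + εw for some λ ∈ ℝ, ε > 0, and a unit vector w orthogonal to v. Suppose H has exactly one eigenvalue λ_ε (counted with multiplicity) in the closed ball of center λ and radius ε, and all other eigenvalues of H are at distance at least d from λ, where d > ε. Then any unit eigenvector v_ε of H associated to λ_ε satisfies ‖v_ε − P_v(v_ε)‖ ≤ 2ε/(d−ε), where P_v is the orthogonal projection onto the線 span of v. -/
open Matrix

open Finset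

section Aux
variable {n : ℕ} {H : Matrix (Fin n) (Fin n) ℂ}

lemma aux_sym (hH : H.IsHermitian) (x y : EuclideanSpace ℂ (Fin n)) :
    inner (𝕜 := ℂ) ((WithLp.equiv 2 _).symm (H.mulVec x) : EuclideanSpace ℂ (Fin n)) y
      = inner (𝕜 := ℂ) x ((WithLp.equiv 2 _).symm (H.mulVec y) : EuclideanSpace ℂ (Fin n)) :=
  (Matrix.isHermitian_iff_isSymmetric.1 hH) x y

lemma aux_eig (hH : H.IsHermitian) (i : Fin n) :
    ((WithLp.equiv 2 _).symm (H.mulVec (hH.eigenvectorBasis i)) : EuclideanSpace ℂ (Fin n))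
      = (hH.eigenvalues i : ℂ) • hH.eigenvectorBasis i := by
  have := hH.mulVec_eigenvectorBasis i
  ext j
  have hj := congrFun this j
  simpa [Complex.real_smul] using hj

/-- Parseval -/
lemma aux_parseval (u : OrthonormalBasis (Fin n) ℂ (EuclideanSpace ℂ (Fin n)))
    (x : EuclideanSpace ℂ (Fin n)) :
    ∑ i, ‖inner (𝕜 := ℂ) (u i) x‖ ^ 2 = ‖x‖ ^ 2 := by
  have h1 : ∀ i, ‖inner (𝕜 := ℂ) (u i) x‖ = ‖u.repr x i‖ := by
    intro i; rw [u.repr_apply_apply]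
  simp_rw [h1]
  rw [← u.repr.norm_map x]
  rw [PiLp.norm_sq_eq_of_L2]

end Aux

/-- **Eigenvectors under perturbation.** Let `H` be an `n × n` Hermitian matrix and `v` a unit
vector with `H v = λ v + ε w` for some `λ ∈ ℝ`, `ε > 0` and a unit vector `w ⟂ v`. Suppose
that `H` has exactly one eigenvalue `λ_ε` (counted with multiplicity, here `λ_ε` is the
eigenvalue of index `i₀` in an enumeration with multiplicity of the eigenvalues) in the
closed ball of center `λ` and radius `ε`, and that all other eigenvalues are at distance at
least `d > ε` from `λ`. Then any unit eigenvector `v_ε` of `H` associated to `λ_ε` satisfies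
`‖v_ε - P_v(v_ε)‖ ≤ 2ε/(d-ε)`, where `P_v x = ⟪v, x⟫ v` is the orthogonal projection onto
the span of `v`. -/
theorem eigenvector_perturbation_bound
    {n : ℕ} (H : Matrix (Fin n) (Fin n) ℂ) (hH : H.IsHermitian)
    (lam ε d : ℝ) (hε : 0 < ε) (hd : ε < d)
    (v w : EuclideanSpace ℂ (Fin n)) (hv : ‖v‖ = 1) (hw : ‖w‖ = 1)
    (hvw : inner (𝕜 := ℂ) v w = 0)
    (h : H.mulVec v = (lam : ℂ) • v + (ε : ℂ) • w)
    (i₀ : Fin n)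
    (h_in : |hH.eigenvalues i₀ - lam| ≤ ε)
    (h_out : ∀ i : Fin n, i ≠ i₀ → d ≤ |hH.eigenvalues i - lam|)
    (vε : EuclideanSpace ℂ (Fin n)) (hvε : ‖vε‖ = 1)
    (heig : H.mulVec vε = (hH.eigenvalues i₀ : ℂ) • vε) :
    ‖vε - (inner (𝕜 := ℂ) v vε) • v‖ ≤ 2 * ε / (d - ε) := by
  have hd0 : (0:ℝ) < d := hε.trans hd
  set u := hH.eigenvectorBasis with hu
  set μ := hH.eigenvalues with hμ
  have h' : ((WithLp.equiv 2 _).symm (H.mulVec v) : EuclideanSpace ℂ (Fin n))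
      = (lam : ℂ) • v + (ε : ℂ) • w := by
    ext j; simpa using congrFun h j
  have heig' : ((WithLp.equiv 2 _).symm (H.mulVec vε) : EuclideanSpace ℂ (Fin n))
      = (μ i₀ : ℂ) • vε := by
    ext j; simpa using congrFun heig j
  have key : ∀ i : Fin n, ((μ i : ℂ) - lam) * inner (𝕜 := ℂ) (u i) v
      = (ε : ℂ) * inner (𝕜 := ℂ) (u i) w := by
    intro i
    have e1 : inner (𝕜 := ℂ) ((WithLp.equiv 2 _).symm (H.mulVec (u i)) : EuclideanSpace ℂ (Fin n)) v
        = (μ i : ℂ) * inner (𝕜 := ℂ) (u i) v := by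
      rw [aux_eig hH i, inner_smul_left]
      simp [Complex.conj_ofReal]
      rfl
    have e2 := aux_sym hH (u i) v
    rw [e1, h', inner_add_right, inner_smul_right, inner_smul_right] at e2
    linear_combination e2
  have horth : ∀ i : Fin n, i ≠ i₀ → inner (𝕜 := ℂ) (u i) vε = 0 := by
    intro i hi
    have e1 : inner (𝕜 := ℂ) ((WithLp.equiv 2 _).symm (H.mulVec (u i)) : EuclideanSpace ℂ (Fin n)) vε
        = (μ i : ℂ) * inner (𝕜 := ℂ) (u i) vε := by
      rw [aux_eig hH i, inner_smul_left]
      simp [Complex.conj_ofReal]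
      rfl
    have e2 := aux_sym hH (u i) vε
    rw [e1, heig', inner_smul_right] at e2
    have hne : (μ i : ℂ) ≠ (μ i₀ : ℂ) := by
      intro hc
      have hcc : μ i = μ i₀ := by exact_mod_cast hc
      have h1 := h_out i hi
      rw [hcc] at h1
      linarith [h_in, h1]
    have h0 := sub_eq_zero.2 e2
    rw [← sub_mul] at h0
    rcases mul_eq_zero.1 h0 with h0 | h0
    · exact absurd (sub_eq_zero.1 h0) hne
    · exact h0
  set c : ℂ := inner (𝕜 := ℂ) (u i₀) vε with hc
  have hvεc : vε = c • u i₀ := by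
    have hs := u.sum_repr' vε
    rw [← hs, Finset.sum_eq_single i₀]
    · intro i _ hi; rw [horth i hi, zero_smul]
    · intro hmem; exact absurd (Finset.mem_univ i₀) hmem
  have hcn : ‖c‖ = 1 := by
    have hn : ‖vε‖ = ‖c‖ * ‖u i₀‖ := by rw [hvεc, norm_smul]
    rw [u.orthonormal.1 i₀, mul_one] at hn
    rw [← hn, hvε]
  set b : ℂ := inner (𝕜 := ℂ) (u i₀) v with hb
  have hoff : ∀ i : Fin n, i ≠ i₀ → ‖inner (𝕜 := ℂ) (u i) v‖ ≤ (ε / d) * ‖inner (𝕜 := ℂ) (u i) w‖ := by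
    intro i hi
    have hk := key i
    have h1 : ‖((μ i : ℂ) - lam)‖ * ‖inner (𝕜 := ℂ) (u i) v‖ = ε * ‖inner (𝕜 := ℂ) (u i) w‖ := by
      rw [← norm_mul, hk, norm_mul, Complex.norm_real, Real.norm_eq_abs, abs_of_pos hε]
    have h2 : ‖((μ i : ℂ) - lam)‖ = |μ i - lam| := by
      rw [show ((μ i : ℂ) - (lam:ℂ)) = ((μ i - lam : ℝ) : ℂ) by push_cast; ring,
        Complex.norm_real, Real.norm_eq_abs]
    have h3 : d ≤ ‖((μ i : ℂ) - lam)‖ := by rw [h2]; exact h_out i hi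
    have h4 : d * ‖inner (𝕜 := ℂ) (u i) v‖ ≤ ε * ‖inner (𝕜 := ℂ) (u i) w‖ := by
      calc d * ‖inner (𝕜 := ℂ) (u i) v‖ ≤ ‖((μ i : ℂ) - lam)‖ * ‖inner (𝕜 := ℂ) (u i) v‖ :=
            mul_le_mul_of_nonneg_right h3 (norm_nonneg _)
        _ = _ := h1
    rw [div_mul_eq_mul_div, le_div_iff₀ hd0, mul_comm]
    exact h4
  have hparv := aux_parseval u v
  have hparw := aux_parseval u w
  rw [hv, one_pow] at hparv
  rw [hw, one_pow] at hparw
  have hsum_off : ∑ i ∈ univ.erase i₀, ‖inner (𝕜 := ℂ) (u i) v‖ ^ 2 ≤ (ε / d) ^ 2 := by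
    calc ∑ i ∈ univ.erase i₀, ‖inner (𝕜 := ℂ) (u i) v‖ ^ 2
        ≤ ∑ i ∈ univ.erase i₀, (ε / d) ^ 2 * ‖inner (𝕜 := ℂ) (u i) w‖ ^ 2 := by
          apply Finset.sum_le_sum
          intro i hi
          have hle := hoff i (Finset.ne_of_mem_erase hi)
          calc ‖inner (𝕜 := ℂ) (u i) v‖ ^ 2 ≤ ((ε/d) * ‖inner (𝕜 := ℂ) (u i) w‖)^2 :=
                pow_le_pow_left₀ (norm_nonneg _) hle 2
            _ = (ε/d)^2 * ‖inner (𝕜 := ℂ) (u i) w‖^2 := by ring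
      _ = (ε / d)^2 * ∑ i ∈ univ.erase i₀, ‖inner (𝕜 := ℂ) (u i) w‖ ^ 2 := by
          rw [Finset.mul_sum]
      _ ≤ (ε / d)^2 * 1 := by
          apply mul_le_mul_of_nonneg_left _ (sq_nonneg _)
          rw [← hparw]
          exact Finset.sum_le_sum_of_subset_of_nonneg (Finset.subset_univ _)
            (fun i _ _ => sq_nonneg _)
      _ = (ε / d)^2 := mul_one _
  have hb2 : 1 - (ε / d)^2 ≤ ‖b‖^2 := by
    rw [← Finset.sum_erase_add univ _ (Finset.mem_univ i₀)] at hparv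
    have : ‖b‖^2 = ‖inner (𝕜 := ℂ) (u i₀) v‖^2 := by rw [hb]
    rw [this]
    linarith [hsum_off, hparv]
  have hinner : inner (𝕜 := ℂ) v vε = c * (starRingEnd ℂ) b := by
    rw [hvεc, inner_smul_right, ← inner_conj_symm v (u i₀)]
  have htv : vε - (inner (𝕜 := ℂ) v vε) • v = c • (u i₀ - (starRingEnd ℂ) b • v) := by
    rw [hinner, hvεc, smul_sub, smul_smul]
  rw [htv, norm_smul, hcn, one_mul]
  have hnorm : ‖u i₀ - (starRingEnd ℂ) b • v‖^2 = 1 - ‖b‖^2 := by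
    rw [@norm_sub_sq ℂ]
    have h1 : inner (𝕜 := ℂ) (u i₀) ((starRingEnd ℂ) b • v) = ((‖b‖^2 : ℝ) : ℂ) := by
      rw [inner_smul_right, ← hb, RCLike.conj_mul]
      norm_cast
    rw [h1]
    simp only [RCLike.re_to_complex, Complex.ofReal_re, norm_smul, RCLike.norm_conj, hv,
      u.orthonormal.1 i₀]
    ring
  have hfin : ‖u i₀ - (starRingEnd ℂ) b • v‖ ≤ ε / d := by
    have h1 : ‖u i₀ - (starRingEnd ℂ) b • v‖^2 ≤ (ε/d)^2 := by
      rw [hnorm]; linarith [hb2]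
    nlinarith [norm_nonneg (u i₀ - (starRingEnd ℂ) b • v), div_pos hε hd0]
  calc ‖u i₀ - (starRingEnd ℂ) b • v‖ ≤ ε / d := hfin
    _ ≤ 2 * ε / (d - ε) := by
        rw [div_le_div_iff₀ hd0 (by linarith)]
        nlinarith
end

section
/- Let A be a nonnegative random variable such that for all x ≥ 0, P(A ≥ x) = ℓ(x) x^{−α}, where ℓ is a slowly varying function and α > 0. Then there exists a slowly varying function L₀ such that for every positive integer k and every x ≥ 0: E[A^k 1_{A ≤ x}] ≤ L₀(x) if k ≤ α, and E[A^k 1_{A ≤ x}] ≤ L₀(x) · (k/(k−α)) · x^{k−α} if k > α. -/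
open MeasureTheory Filter

noncomputable section

/-- A function `L : ℝ → ℝ` is *slowly varying* (at `+∞`) if for every `t > 0`,
`L (t x) / L x → 1` as `x → +∞`. -/
def SlowlyVarying (L : ℝ → ℝ) : Prop :=
  ∀ t : ℝ, 0 < t → Tendsto (fun x => L (t * x) / L x) atTop (nhds 1)

set_option maxHeartbeats 1000000

open Set
open scoped ENNReal NNReal

/-- An auxiliary sufficient condition for slow variation. -/
def GoodSV (f : ℝ → ℝ) : Prop :=
  ∀ t : ℝ, 1 ≤ t → ∀ ε : ℝ, 0 < ε →
    ∀ᶠ x in atTop, f x ≤ f (t * x) ∧ f (t * x) ≤ (1 + ε) * f x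

lemma goodSV_zero : GoodSV (fun _ => 0) := by
  intro t ht ε hε
  filter_upwards [eventually_ge_atTop (0:ℝ)] with x _
  constructor <;> simp

lemma GoodSV.add {f g : ℝ → ℝ} (hf : GoodSV f) (hg : GoodSV g) :
    GoodSV (fun x => f x + g x) := by
  intro t ht ε hε
  filter_upwards [hf t ht ε hε, hg t ht ε hε] with x ⟨hf1, hf2⟩ ⟨hg1, hg2⟩
  constructor
  · exact add_le_add hf1 hg1
  · calc f (t*x) + g (t*x) ≤ (1+ε) * f x + (1+ε) * g x := add_le_add hf2 hg2
      _ = (1+ε) * (f x + g x) := by ring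

lemma GoodSV.const_mul {f : ℝ → ℝ} (hf : GoodSV f) (c : ℝ) (hc : 0 ≤ c) :
    GoodSV (fun x => c * f x) := by
  intro t ht ε hε
  filter_upwards [hf t ht ε hε] with x ⟨h1, h2⟩
  refine ⟨by nlinarith, by nlinarith⟩

lemma goodSV_sum {ι : Type*} (s : Finset ι) (f : ι → ℝ → ℝ)
    (h : ∀ i ∈ s, GoodSV (f i)) :
    GoodSV (fun x => ∑ i ∈ s, f i x) := by
  classical
  induction s using Finset.induction with
  | empty => simpa using goodSV_zero
  | insert a s hnotmem ih =>
    have : GoodSV (fun x => f a x + ∑ i ∈ s, f i x) :=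
      (h a (Finset.mem_insert_self a s)).add
        (ih (fun i hi => h i (Finset.mem_insert_of_mem hi)))
    simpa [Finset.sum_insert hnotmem] using this

lemma slowlyVarying_of_goodSV {f : ℝ → ℝ} (hf : GoodSV f)
    (hpos : ∀ᶠ x in atTop, 0 < f x) : SlowlyVarying f := by
  have key : ∀ t : ℝ, 1 ≤ t → Tendsto (fun x => f (t * x) / f x) atTop (nhds 1) := by
    intro t ht
    rw [Metric.tendsto_nhds]
    intro ε hε
    have hε2 : 0 < ε / 2 := by linarith
    filter_upwards [hf t ht (ε/2) hε2, hpos] with x ⟨h1, h2⟩ hx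
    rw [Real.dist_eq, abs_lt]
    constructor
    · have : 1 ≤ f (t*x) / f x := (one_le_div hx).mpr h1
      linarith
    · have : f (t*x) / f x ≤ 1 + ε/2 := (div_le_iff₀ hx).mpr (by linarith [h2])
      linarith
  intro t ht
  rcases le_or_gt 1 t with h1t | h1t
  · exact key t h1t
  · have hinv : (1:ℝ) ≤ t⁻¹ := (one_le_inv_iff₀).mpr ⟨ht, le_of_lt h1t⟩
    have hmul : Tendsto (fun x : ℝ => t * x) atTop atTop :=
      Tendsto.const_mul_atTop ht tendsto_id
    have h2 : Tendsto (fun x => f (t⁻¹ * (t * x)) / f (t * x)) atTop (nhds 1) :=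
      (key t⁻¹ hinv).comp hmul
    have heq : (fun x => f (t⁻¹ * (t * x)) / f (t * x)) =
        (fun x => f x / f (t * x)) := by
      funext x
      rw [← mul_assoc, inv_mul_cancel₀ (ne_of_gt ht), one_mul]
    rw [heq] at h2
    have h3 := h2.inv₀ one_ne_zero
    simp only [inv_one] at h3
    have heq2 : (fun x => (f x / f (t * x))⁻¹) = (fun x => f (t * x) / f x) := by
      funext x; rw [inv_div]
    rwa [heq2] at h3

/-- Numeric inequality: `β + 2 ≤ 2 * 2^β` for `β ≥ 0`. -/
lemma two_rpow_bound {β : ℝ} (hβ : 0 ≤ β) : β + 2 ≤ 2 * (2:ℝ) ^ β := by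
  have h1 : β * Real.log 2 + 1 ≤ Real.exp (β * Real.log 2) := Real.add_one_le_exp _
  have h2 : (2:ℝ) ^ β = Real.exp (Real.log 2 * β) := Real.rpow_def_of_pos two_pos β
  have hlog : (0.6931471803:ℝ) < Real.log 2 := Real.log_two_gt_d9
  rw [mul_comm] at h2
  nlinarith [mul_nonneg hβ (by linarith : (0:ℝ) ≤ 2 * Real.log 2 - 1)]

/-- `1 - 2^{-β} ≥ β / (β + 2)` for `β > 0`. -/
lemma one_sub_two_rpow_neg_ge {β : ℝ} (hβ : 0 < β) :
    β / (β + 2) ≤ 1 - (2:ℝ) ^ (-β) := by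
  have h2 : (0:ℝ) < (2:ℝ) ^ β := Real.rpow_pos_of_pos two_pos β
  have hneg : (2:ℝ) ^ (-β) = ((2:ℝ) ^ β)⁻¹ := Real.rpow_neg (by norm_num) β
  have hb := two_rpow_bound hβ.le
  rw [hneg]
  rw [div_le_iff₀ (by linarith)]
  have key : ((2:ℝ)^β)⁻¹ * (β + 2) ≤ 2 := by
    rw [inv_mul_le_iff₀ h2]
    nlinarith
  have hβ2 : (0:ℝ) < β + 2 := by linarith
  have hinv : (0:ℝ) < ((2:ℝ)^β)⁻¹ := by positivity
  nlinarith

/-- The main numeric inequality for the `k > α` case. -/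
lemma numeric_main {α β : ℝ} (hα : 0 < α) (hβ : 0 < β) :
    (1 - (2:ℝ) ^ (-β))⁻¹ ≤ (1 + 2/α) * ((β + α) / β) := by
  have h1 := one_sub_two_rpow_neg_ge hβ
  have hpos : (0:ℝ) < β / (β + 2) := by positivity
  have h2 : (1 - (2:ℝ) ^ (-β))⁻¹ ≤ (β / (β + 2))⁻¹ := inv_anti₀ hpos h1
  have h3 : (β / (β + 2))⁻¹ = (β + 2) / β := by rw [inv_div]
  rw [h3] at h2
  refine h2.trans ?_
  have e0 : (1 + 2/α) * ((β + α) / β) = ((1 + 2/α) * (β + α)) / β := by ring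
  rw [e0, div_le_div_iff_of_pos_right hβ]
  have e1 : (2/α)*(β+α) = 2*β/α + 2 := by field_simp
  have e2 : 0 ≤ 2*β/α := by positivity
  nlinarith


lemma goodSV_sup {α : ℝ} (hα : 0 < α) {ℓ T : ℝ → ℝ}
    (hTanti : Antitone T)
    (hT1 : ∀ s, T s ≤ 1) (hTnn : ∀ s, 0 ≤ T s)
    (hℓT : ∀ s : ℝ, 0 < s → ℓ s = s ^ α * T s)
    (hℓ : SlowlyVarying ℓ)
    (hℓpos : ∀ᶠ x in atTop, 0 < ℓ x) :
    GoodSV (fun x => sSup (ℓ '' Set.Ioc 0 x)) := by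
  set G : ℝ → ℝ := fun x => sSup (ℓ '' Set.Ioc 0 x) with hGdef
  have hbdd : ∀ x : ℝ, 0 < x → BddAbove (ℓ '' Set.Ioc 0 x) := by
    intro x hx
    refine ⟨x ^ α, ?_⟩
    rintro y ⟨s, hs, rfl⟩
    calc ℓ s = s ^ α * T s := hℓT s hs.1
      _ ≤ s ^ α * 1 := by
          apply mul_le_mul_of_nonneg_left (hT1 s)
          exact Real.rpow_nonneg hs.1.le _
      _ = s ^ α := mul_one _
      _ ≤ x ^ α := Real.rpow_le_rpow hs.1.le hs.2 hα.le
  have hGge : ∀ x : ℝ, 0 < x → ℓ x ≤ G x := by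
    intro x hx
    exact le_csSup (hbdd x hx) ⟨x, ⟨hx, le_refl x⟩, rfl⟩
  intro t ht ε hε
  set ε' : ℝ := min ε 1 with hε'def
  have hε'pos : 0 < ε' := lt_min hε one_pos
  have hε'le1 : ε' ≤ 1 := min_le_right _ _
  have hε'leε : ε' ≤ ε := min_le_left _ _
  set δ : ℝ := ε' / 3 with hδdef
  have hδpos : 0 < δ := by positivity
  have hδle : δ ≤ 1/3 := by rw [hδdef]; linarith
  have h1δ : (1:ℝ) < 1 + δ := by linarith
  set r : ℝ := (1 + δ) ^ (α⁻¹) with hrdef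
  have hrpos : 0 < r := Real.rpow_pos_of_pos (by linarith) _
  have hr1 : 1 < r := by
    rw [hrdef]
    exact Real.one_lt_rpow_iff_of_pos (by linarith) |>.mpr
      (Or.inl ⟨h1δ, by positivity⟩)
  have hrα : r ^ α = 1 + δ := by
    rw [hrdef, ← Real.rpow_mul (by linarith : (0:ℝ) ≤ 1 + δ),
      inv_mul_cancel₀ hα.ne', Real.rpow_one]
  set n : ℕ := ⌈Real.logb r t⌉₊ with hndef
  have htpos : 0 < t := lt_of_lt_of_le one_pos ht
  have htr : t ≤ r ^ n := by
    have h1 : t = r ^ (Real.logb r t) := (Real.rpow_logb hrpos (ne_of_gt hr1) htpos).symm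
    have h2 : r ^ (Real.logb r t) ≤ r ^ ((n:ℕ):ℝ) :=
      Real.rpow_le_rpow_of_exponent_le hr1.le (Nat.le_ceil _)
    rw [Real.rpow_natCast] at h2
    linarith [h1 ▸ h2]
  -- eventual statements
  have ev3 : ∀ᶠ x in atTop, ∀ j ∈ Finset.range (n+1), ℓ (r^j * x) ≤ (1+δ) * ℓ x := by
    rw [eventually_all_finset]
    intro j _
    have hrj : (0:ℝ) < r^j := by positivity
    have h1 := hℓ (r^j) hrj
    filter_upwards [h1.eventually_lt_const h1δ, hℓpos] with x hx hℓx
    have := (div_lt_iff₀ hℓx).mp hx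
    linarith
  filter_upwards [eventually_ge_atTop (1:ℝ), hℓpos, ev3] with x hx1 hℓx hev3
  have hxpos : (0:ℝ) < x := lt_of_lt_of_le one_pos hx1
  have htxpos : 0 < t * x := by positivity
  have hGxpos : 0 < G x := lt_of_lt_of_le hℓx (hGge x hxpos)
  constructor
  · -- monotone
    apply csSup_le_csSup (hbdd _ htxpos)
    · exact ⟨ℓ x, ⟨x, ⟨hxpos, le_refl x⟩, rfl⟩⟩
    · apply Set.image_mono
      apply Set.Ioc_subset_Ioc_right
      nlinarith
  · -- upper bound
    apply Real.sSup_le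
    · rintro y ⟨s, hs, rfl⟩
      rcases le_or_gt s x with hsx | hsx
      · calc ℓ s ≤ G x := le_csSup (hbdd x hxpos) ⟨s, ⟨hs.1, hsx⟩, rfl⟩
          _ ≤ (1+ε) * G x := by nlinarith
      · -- x < s ≤ t x
        set u : ℝ := Real.logb r (s/x) with hudef
        have hsxpos : (0:ℝ) < s / x := div_pos (hxpos.trans hsx) hxpos
        have hsx1 : (1:ℝ) < s / x := (one_lt_div hxpos).mpr hsx
        have hu0 : 0 < u := Real.logb_pos hr1 hsx1
        have hru : r ^ u = s / x := Real.rpow_logb hrpos (ne_of_gt hr1) hsxpos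
        have hun : u ≤ (n:ℝ) := by
          rw [← Real.rpow_le_rpow_left_iff hr1, hru]
          rw [Real.rpow_natCast]
          calc s / x ≤ (t * x) / x := by gcongr; exact hs.2
              _ = t := by field_simp
              _ ≤ r ^ n := htr
        set j : ℕ := ⌈u⌉₊ - 1 with hjdef
        have hceil1 : 1 ≤ ⌈u⌉₊ := Nat.one_le_ceil_iff.mpr hu0
        have hjcast : ((j:ℕ):ℝ) = (⌈u⌉₊:ℝ) - 1 := by
          rw [hjdef]
          push_cast [Nat.cast_sub hceil1]
          ring
        have hjlt : (j:ℝ) < u := by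
          have := Nat.ceil_lt_add_one hu0.le
          rw [hjcast]; linarith
        have hj1u : u ≤ (j:ℝ) + 1 := by
          have := Nat.le_ceil u
          rw [hjcast]; linarith
        have hjn : j + 1 ≤ n := by
          have h1 : ⌈u⌉₊ ≤ n := Nat.ceil_le.mpr hun
          omega
        have hrjx : (0:ℝ) < r^j * x := by positivity
        have hs_low : r^j * x < s := by
          have h1 : (r:ℝ)^(j:ℕ) < r ^ u := by
            rw [← Real.rpow_natCast r j]
            exact Real.rpow_lt_rpow_of_exponent_lt hr1 hjlt
          rw [hru] at h1
          calc r^j * x < (s/x) * x := by nlinarith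
            _ = s := by field_simp
        have hs_high : s ≤ r^(j+1) * x := by
          have h1 : r ^ u ≤ (r:ℝ)^((j:ℕ)+1) := by
            rw [← Real.rpow_natCast r (j+1)]
            apply Real.rpow_le_rpow_of_exponent_le hr1.le
            push_cast; linarith
          rw [hru] at h1
          calc s = (s/x) * x := by field_simp
            _ ≤ r^(j+1) * x := by nlinarith
        calc ℓ s = s ^ α * T s := hℓT s hs.1
          _ ≤ (r^(j+1) * x) ^ α * T (r^j * x) := by
              apply mul_le_mul
              · exact Real.rpow_le_rpow hs.1.le hs_high hα.le
              · exact hTanti hs_low.le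
              · exact hTnn s
              · positivity
          _ = r ^ α * ((r^j * x) ^ α * T (r^j * x)) := by
              have : r^(j+1) * x = r * (r^j * x) := by ring
              rw [this, Real.mul_rpow hrpos.le hrjx.le]
              ring
          _ = (1 + δ) * ℓ (r^j * x) := by rw [hrα, hℓT _ hrjx]
          _ ≤ (1 + δ) * ((1 + δ) * ℓ x) := by
              apply mul_le_mul_of_nonneg_left _ (by linarith)
              exact hev3 j (Finset.mem_range.mpr (by omega))
          _ ≤ (1 + ε) * ℓ x := by
              have hfac : (1+δ)*(1+δ) ≤ 1+ε := by nlinarith [hδle, hδpos, hε'leε, hε'le1]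
              rw [← mul_assoc]
              exact mul_le_mul_of_nonneg_right hfac hℓx.le
          _ ≤ (1 + ε) * G x := by
              apply mul_le_mul_of_nonneg_left (hGge x hxpos) (by linarith)
    · nlinarith


/-- `GoodSV` for truncated moments when `k < α`. -/
lemma goodSV_H_lt {T H : ℝ → ℝ} (k : ℕ)
    (hHnn : ∀ x, 0 ≤ H x) (hHmono : Monotone H)
    (hM3 : ∀ x y : ℝ, 0 ≤ x → x ≤ y → H y ≤ H x + y^k * T x)
    (hlow : ∀ x : ℝ, 1 ≤ x → T 2 - T x ≤ H x)
    (hT2pos : 0 < T 2) (hTnn : ∀ s, 0 ≤ T s)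
    (hxkT : Tendsto (fun x => x^k * T x) atTop (nhds 0)) :
    GoodSV H := by
  intro t ht ε hε
  have htpos : (0:ℝ) < t := lt_of_lt_of_le one_pos ht
  have htk : (0:ℝ) < t^k := by positivity
  set c : ℝ := T 2 / 2 with hcdef
  have hcpos : 0 < c := by positivity
  have hsmall : (0:ℝ) < min c (ε * c / t^k) := lt_min hcpos (by positivity)
  have hev := hxkT.eventually_lt_const hsmall
  filter_upwards [eventually_ge_atTop (1:ℝ), hev] with x hx1 hxk
  have hxpos : (0:ℝ) < x := lt_of_lt_of_le one_pos hx1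
  have hxtx : x ≤ t * x := le_mul_of_one_le_left hxpos.le ht
  refine ⟨hHmono hxtx, ?_⟩
  -- lower bound on H x
  have hTle : T x ≤ x^k * T x := le_mul_of_one_le_left (hTnn x) (one_le_pow₀ hx1)
  have hHlow : c ≤ H x := by
    have h1 := hlow x hx1
    have h2 : x^k * T x < c := lt_of_lt_of_le hxk (min_le_left _ _)
    have h3 : T x < c := lt_of_le_of_lt hTle h2
    rw [hcdef] at *
    linarith
  have hM := hM3 x (t*x) hxpos.le hxtx
  have heq : (t*x)^k * T x = t^k * (x^k * T x) := by rw [mul_pow]; ring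
  have h4 : x^k * T x ≤ ε * c / t^k := le_of_lt (lt_of_lt_of_le hxk (min_le_right _ _))
  have h5 : (t*x)^k * T x ≤ ε * c := by
    rw [heq]
    calc t^k * (x^k * T x) ≤ t^k * (ε * c / t^k) :=
          mul_le_mul_of_nonneg_left h4 htk.le
      _ = ε * c := by field_simp
  calc H (t*x) ≤ H x + (t*x)^k * T x := hM
    _ ≤ H x + ε * c := by linarith
    _ ≤ H x + ε * H x := by nlinarith
    _ = (1+ε) * H x := by ring

/-- `GoodSV` for truncated moments when `k = α`. -/
lemma goodSV_H_eq {α : ℝ} (hα : 0 < α) {T T' ℓ H : ℝ → ℝ} (k : ℕ)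
    (hkα : (k:ℝ) = α)
    (hHnn : ∀ x, 0 ≤ H x) (hHmono : Monotone H)
    (hM3 : ∀ x y : ℝ, 0 ≤ x → x ≤ y → H y ≤ H x + y^k * T x)
    (hM4 : ∀ a b : ℝ, 0 < a → a ≤ b → a^k * (T' a - T' b) ≤ H b - H a)
    (hT'leT : ∀ s, T' s ≤ T s) (hT'ge : ∀ s : ℝ, 0 < s → T (2*s) ≤ T' s)
    (hℓT : ∀ s : ℝ, 0 < s → ℓ s = s ^ α * T s)
    (hℓ : SlowlyVarying ℓ) (hℓpos : ∀ᶠ x in atTop, 0 < ℓ x) :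
    GoodSV H := by
  set q : ℝ := (4:ℝ)⁻¹ with hqdef
  have hqpos : (0:ℝ) < q := by norm_num [hqdef]
  have hqle1 : q ≤ 1 := by norm_num [hqdef]
  set κ : ℝ := (2:ℝ)^(-α) - (4:ℝ)^(-α) with hκdef
  have hκpos : 0 < κ := by
    rw [hκdef, sub_pos]
    have h24 : (2:ℝ)^α < (4:ℝ)^α := Real.rpow_lt_rpow (by norm_num) (by norm_num) hα
    rw [Real.rpow_neg (by norm_num : (0:ℝ) ≤ 2), Real.rpow_neg (by norm_num : (0:ℝ) ≤ 4)]
    exact inv_strictAnti₀ (Real.rpow_pos_of_pos two_pos α) h24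
  -- the lower-bound comparison functions
  set φ : ℕ → ℝ → ℝ := fun i x =>
    (2:ℝ)^(-α) * ℓ ((2*q^(i+1))*x) - (4:ℝ)^(-α) * ℓ ((q^i)*x) with hφdef
  set ψ : ℕ → ℝ → ℝ := fun i x =>
    (q^(i+1)*x)^k * (T' (q^(i+1)*x) - T' (q^i*x)) with hψdef
  have htel : ∀ x : ℝ, 0 < x → ∀ m : ℕ,
      ∑ i ∈ Finset.range m, ψ i x ≤ H x := by
    intro x hx m
    have h1 : ∑ i ∈ Finset.range m, ψ i x ≤
        ∑ i ∈ Finset.range m, (H (q^i*x) - H (q^(i+1)*x)) := by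
      apply Finset.sum_le_sum
      intro i _
      apply hM4 (q^(i+1)*x) (q^i*x) (by positivity)
      apply mul_le_mul_of_nonneg_right _ hx.le
      exact pow_le_pow_of_le_one hqpos.le hqle1 (by omega)
    rw [Finset.sum_range_sub' (fun i => H (q^i*x)) m] at h1
    simp only [pow_zero, one_mul] at h1
    linarith [hHnn (q^m*x)]
  have hφψ : ∀ x : ℝ, 0 < x → ∀ i : ℕ, φ i x ≤ ψ i x := by
    intro x hx i
    set a : ℝ := q^(i+1)*x with hadef
    set b : ℝ := q^i*x with hbdef
    have hapos : 0 < a := by positivity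
    have hbpos : 0 < b := by positivity
    have hak : a^k = a^α := by rw [← Real.rpow_natCast a k, hkα]
    have h2a : (0:ℝ) < 2*a := by linarith
    have e1 : a^α * T (2*a) = (2:ℝ)^(-α) * ℓ (2*a) := by
      rw [hℓT (2*a) h2a, Real.mul_rpow (by norm_num : (0:ℝ) ≤ 2) hapos.le]
      have h21 : (2:ℝ)^(-α) * (2:ℝ)^α = 1 := by
        rw [← Real.rpow_add two_pos]; simp
      calc a^α * T (2*a) = ((2:ℝ)^(-α) * (2:ℝ)^α) * (a^α * T (2*a)) := by
            rw [h21]; ring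
        _ = (2:ℝ)^(-α) * ((2:ℝ)^α * a^α * T (2*a)) := by ring
    have e2 : a^α * T b = (4:ℝ)^(-α) * ℓ b := by
      have hab : a = q * b := by rw [hadef, hbdef]; ring
      have hqα : q^α = (4:ℝ)^(-α) := by
        rw [hqdef, ← Real.rpow_neg_one (4:ℝ), ← Real.rpow_mul (by norm_num : (0:ℝ) ≤ 4)]
        ring_nf
      rw [hab, Real.mul_rpow hqpos.le hbpos.le, hqα, hℓT b hbpos]
      ring
    have h1 : a^α * T (2*a) ≤ a^α * T' a := by
      apply mul_le_mul_of_nonneg_left (hT'ge a hapos)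
      exact Real.rpow_nonneg hapos.le α
    have h2 : a^α * T' b ≤ a^α * T b := by
      apply mul_le_mul_of_nonneg_left (hT'leT b)
      exact Real.rpow_nonneg hapos.le α
    have e3 : (2*q^(i+1))*x = 2*a := by rw [hadef]; ring
    calc φ i x = (2:ℝ)^(-α) * ℓ (2*a) - (4:ℝ)^(-α) * ℓ b := by
          rw [hφdef]; simp only []; rw [e3]
      _ = a^α * T (2*a) - a^α * T b := by rw [e1, e2]
      _ ≤ a^α * T' a - a^α * T' b := by linarith
      _ = a^k * (T' a - T' b) := by rw [hak]; ring
      _ = ψ i x := rfl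
  have hratio : ∀ m : ℕ, Tendsto
      (fun x => (∑ i ∈ Finset.range m, φ i x) / ℓ x) atTop (nhds (m * κ)) := by
    intro m
    have heach : ∀ i ∈ Finset.range m,
        Tendsto (fun x => φ i x / ℓ x) atTop (nhds κ) := by
      intro i _
      have hc1 : (0:ℝ) < 2*q^(i+1) := by positivity
      have hc2 : (0:ℝ) < q^i := by positivity
      have t1 := (hℓ _ hc1).const_mul ((2:ℝ)^(-α))
      have t2 := (hℓ _ hc2).const_mul ((4:ℝ)^(-α))
      have t3 := t1.sub t2
      simp only [mul_one] at t3
      have : (fun x => φ i x / ℓ x) = (fun x =>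
          (2:ℝ)^(-α) * (ℓ ((2*q^(i+1))*x) / ℓ x) - (4:ℝ)^(-α) * (ℓ ((q^i)*x) / ℓ x)) := by
        funext x
        rw [hφdef]
        simp only []
        rw [sub_div, mul_div_assoc, mul_div_assoc]
      rw [this]
      exact t3
    have := tendsto_finset_sum (Finset.range m) heach
    simp only [Finset.sum_const, Finset.card_range, nsmul_eq_mul] at this
    have heq : (fun x => ∑ i ∈ Finset.range m, (φ i x / ℓ x)) =
        (fun x => (∑ i ∈ Finset.range m, φ i x) / ℓ x) := by
      funext x; rw [Finset.sum_div]
    rwa [heq] at this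
  -- main argument
  intro t ht ε hε
  have htpos : (0:ℝ) < t := lt_of_lt_of_le one_pos ht
  have htk : (0:ℝ) < t^k := by positivity
  set m : ℕ := ⌈(2*t^k)/(ε*κ)⌉₊ + 1 with hmdef
  have hm : (2*t^k)/(ε*κ) ≤ (m:ℝ) := by
    rw [hmdef]; push_cast
    linarith [Nat.le_ceil ((2*t^k)/(ε*κ))]
  have hmκ : 2*t^k ≤ ε * κ * m := by
    have hεκ : (0:ℝ) < ε * κ := by positivity
    rw [div_le_iff₀ hεκ] at hm
    linarith
  have hmκ2 : (m:ℝ)*κ/2 < (m:ℝ)*κ := by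
    have hm1' : 1 ≤ m := by rw [hmdef]; omega
    have hm1 : (1:ℝ) ≤ (m:ℝ) := by exact_mod_cast hm1'
    nlinarith
  have hev := (hratio m).eventually_const_lt hmκ2
  filter_upwards [eventually_ge_atTop (1:ℝ), hℓpos, hev] with x hx1 hℓx hr
  have hxpos : (0:ℝ) < x := lt_of_lt_of_le one_pos hx1
  have hxtx : x ≤ t * x := le_mul_of_one_le_left hxpos.le ht
  refine ⟨hHmono hxtx, ?_⟩
  -- lower bound: (m κ/2) ℓ x ≤ H x
  have hSig : (m:ℝ)*κ/2 * ℓ x ≤ H x := by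
    have h1 : (m:ℝ)*κ/2 * ℓ x ≤ (∑ i ∈ Finset.range m, φ i x) := by
      have h2 : (m:ℝ)*κ/2 ≤ (∑ i ∈ Finset.range m, φ i x) / ℓ x := hr.le
      calc (m:ℝ)*κ/2 * ℓ x ≤ ((∑ i ∈ Finset.range m, φ i x) / ℓ x) * ℓ x :=
            mul_le_mul_of_nonneg_right h2 hℓx.le
        _ = ∑ i ∈ Finset.range m, φ i x := by field_simp
    calc (m:ℝ)*κ/2 * ℓ x ≤ ∑ i ∈ Finset.range m, φ i x := h1
      _ ≤ ∑ i ∈ Finset.range m, ψ i x := Finset.sum_le_sum (fun i _ => hφψ x hxpos i)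
      _ ≤ H x := htel x hxpos m
  have hM := hM3 x (t*x) hxpos.le hxtx
  have heq : (t*x)^k * T x = t^k * ℓ x := by
    rw [mul_pow, hℓT x hxpos, ← Real.rpow_natCast x k, hkα]
    ring
  have hfin : t^k * ℓ x ≤ ε * H x := by
    have h1 : t^k * ℓ x ≤ (ε * κ * m / 2) * ℓ x := by
      apply mul_le_mul_of_nonneg_right _ hℓx.le
      show t^k ≤ ε * κ * (m:ℝ) / 2
      nlinarith [hmκ]
    calc t^k * ℓ x ≤ (ε * κ * m / 2) * ℓ x := h1
      _ = ε * ((m:ℝ)*κ/2 * ℓ x) := by ring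
      _ ≤ ε * H x := mul_le_mul_of_nonneg_left hSig hε.le
  calc H (t*x) ≤ H x + (t*x)^k * T x := hM
    _ = H x + t^k * ℓ x := by rw [heq]
    _ ≤ H x + ε * H x := by linarith
    _ = (1+ε) * H x := by ring



/-- If `T` is antitone, positive, and `T(2x)/T(x) → 2^{-α}`, then `x^k T(x) → 0`
whenever `k < α`. -/
lemma tendsto_pow_mul_tail {α : ℝ} (hα : 0 < α) {T : ℝ → ℝ}
    (hTanti : Antitone T) (hTpos : ∀ s, 0 < T s)
    (h2T : Tendsto (fun x => T (2*x) / T x) atTop (nhds ((2:ℝ)^(-α))))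
    (k : ℕ) (hk : (k:ℝ) < α) :
    Tendsto (fun x => x^k * T x) atTop (nhds 0) := by
  set ρ : ℝ := (2:ℝ) ^ (-((α + k)/2)) with hρdef
  have hρpos : 0 < ρ := Real.rpow_pos_of_pos two_pos _
  have hρgt : (2:ℝ)^(-α) < ρ := by
    apply Real.rpow_lt_rpow_of_exponent_lt one_lt_two
    linarith
  -- eventually T(2x) ≤ ρ T x
  have hev : ∀ᶠ x in atTop, T (2*x) ≤ ρ * T x := by
    filter_upwards [h2T.eventually_lt_const hρgt] with x hx
    have := (div_lt_iff₀ (hTpos x)).mp hx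
    linarith
  obtain ⟨x₀, hx₀⟩ := hev.exists_forall_of_atTop
  -- can assume x₀ ≥ 1
  set x₁ : ℝ := max x₀ 1 with hx₁def
  have hx₁pos : (0:ℝ) < x₁ := lt_of_lt_of_le one_pos (le_max_right _ _)
  have hx₁ : ∀ x ≥ x₁, T (2*x) ≤ ρ * T x := fun x hx => hx₀ x (le_trans (le_max_left _ _) hx)
  -- geometric decay along powers of two
  have hgeo : ∀ n : ℕ, T (2^n * x₁) ≤ ρ^n * T x₁ := by
    intro n
    induction n with
    | zero => simp
    | succ n ih =>
      have h1 : (2:ℝ)^(n+1) * x₁ = 2 * (2^n * x₁) := by ring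
      have h2 : x₁ ≤ 2^n * x₁ := by
        nlinarith [(one_le_pow₀ one_le_two : (1:ℝ) ≤ 2^n), hx₁pos]
      calc T (2^(n+1) * x₁) = T (2 * (2^n * x₁)) := by rw [h1]
        _ ≤ ρ * T (2^n * x₁) := hx₁ _ h2
        _ ≤ ρ * (ρ^n * T x₁) := by
            exact mul_le_mul_of_nonneg_left ih hρpos.le
        _ = ρ^(n+1) * T x₁ := by ring
  set η : ℝ := 2^k * ρ with hηdef
  have hηpos : 0 < η := by positivity
  have hηlt : η < 1 := by
    have : η = (2:ℝ) ^ ((k:ℝ) - (α + k)/2) := by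
      rw [hηdef, hρdef, ← Real.rpow_natCast 2 k, ← Real.rpow_add two_pos]
      ring_nf
    rw [this]
    exact Real.rpow_lt_one_of_one_lt_of_neg one_lt_two (by linarith)
  set C₀ : ℝ := 2^k * x₁^k * T x₁ with hC₀def
  have key : ∀ x ≥ x₁, x^k * T x ≤ C₀ * η ^ (Nat.log 2 ⌊x/x₁⌋₊) := by
    intro x hx
    have hxpos : 0 < x := lt_of_lt_of_le hx₁pos hx
    have hdiv1 : (1:ℝ) ≤ x / x₁ := (one_le_div hx₁pos).mpr hx
    set m : ℕ := ⌊x/x₁⌋₊ with hmdef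
    have hm1 : 1 ≤ m := by
      rw [hmdef]
      exact_mod_cast Nat.le_floor (by exact_mod_cast hdiv1)
    set n : ℕ := Nat.log 2 m with hndef
    have hlow : (2:ℝ)^n * x₁ ≤ x := by
      have h1 : (2:ℕ)^n ≤ m := Nat.pow_log_le_self 2 (by omega)
      have h2 : ((2:ℝ))^n ≤ (m:ℝ) := by exact_mod_cast h1
      have h3 : (m:ℝ) ≤ x / x₁ := Nat.floor_le (by linarith)
      calc (2:ℝ)^n * x₁ ≤ (x/x₁) * x₁ := by nlinarith
        _ = x := by field_simp
    have hhigh : x ≤ 2^(n+1) * x₁ := by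
      have h1 : m < 2^(n+1) := Nat.lt_pow_succ_log_self one_lt_two m
      have h2 : x / x₁ < (m:ℝ) + 1 := Nat.lt_floor_add_one _
      have h3 : (m:ℝ) + 1 ≤ (2:ℝ)^(n+1) := by exact_mod_cast Nat.succ_le_of_lt h1
      have : x / x₁ ≤ (2:ℝ)^(n+1) := by linarith
      calc x = (x/x₁) * x₁ := by field_simp
        _ ≤ (2:ℝ)^(n+1) * x₁ := by nlinarith
    have hT : T x ≤ ρ^n * T x₁ := le_trans (hTanti hlow) (hgeo n)
    have hxk : x^k ≤ (2^(n+1) * x₁)^k := pow_le_pow_left₀ hxpos.le hhigh k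
    calc x^k * T x ≤ (2^(n+1) * x₁)^k * (ρ^n * T x₁) := by
          apply mul_le_mul hxk hT (hTpos x).le (by positivity)
      _ = C₀ * η ^ n := by rw [hC₀def, hηdef]; ring

  -- conclude by squeezing
  have hlogto : Tendsto (fun x : ℝ => Nat.log 2 ⌊x/x₁⌋₊) atTop atTop := by
    have h1 : Tendsto (fun x : ℝ => x / x₁) atTop atTop :=
      tendsto_id.atTop_div_const hx₁pos
    have h2 : Tendsto (fun x : ℝ => ⌊x/x₁⌋₊) atTop atTop :=
      tendsto_nat_floor_atTop.comp h1
    have h3 : Tendsto (Nat.log 2) atTop atTop := by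
      apply tendsto_atTop_atTop.2
      intro b
      refine ⟨2^b, fun m hm => (Nat.le_log_iff_pow_le one_lt_two ?_).mpr hm⟩
      have h0 : 0 < 2^b := pow_pos (by norm_num) b
      omega
    exact h3.comp h2
  have hgto : Tendsto (fun x : ℝ => C₀ * η ^ (Nat.log 2 ⌊x/x₁⌋₊)) atTop (nhds 0) := by
    have h1 : Tendsto (fun n : ℕ => η ^ n) atTop (nhds 0) :=
      tendsto_pow_atTop_nhds_zero_of_lt_one hηpos.le hηlt
    have h2 := (h1.comp hlogto).const_mul C₀
    simpa using h2
  apply squeeze_zero' ?_ ?_ hgto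
  · filter_upwards [eventually_ge_atTop (0:ℝ)] with x hx
    exact mul_nonneg (by positivity) (hTpos x).le
  · filter_upwards [eventually_ge_atTop x₁] with x hx
    exact key x hx



/-- **A uniform bound for truncated moments of heavy-tailed variables.** Let `A ≥ 0` be a
random variable with `P(A ≥ x) = ℓ(x) x^{-α}` for all `x > 0`, where `ℓ` is slowly varying
and `α > 0`. Then there is a slowly varying function `L₀` such that for every positive
integer `k` and every `x ≥ 0`:
`E[A^k 1_{A ≤ x}] ≤ L₀(x)` if `k ≤ α`, and
`E[A^k 1_{A ≤ x}] ≤ L₀(x) (k/(k-α)) x^{k-α}` if `k > α`. -/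
theorem truncated_moments_heavy_tailed
    {Ω : Type*} [MeasurableSpace Ω] (P : Measure Ω) [IsProbabilityMeasure P]
    (α : ℝ) (hα : 0 < α)
    (A : Ω → ℝ) (hmeas : Measurable A) (hnonneg : ∀ ω, 0 ≤ A ω)
    (ℓ : ℝ → ℝ) (hℓ : SlowlyVarying ℓ)
    (htail : ∀ x : ℝ, 0 < x → (P {ω | x ≤ A ω}).toReal = ℓ x * x ^ (-α)) :
    ∃ L₀ : ℝ → ℝ, SlowlyVarying L₀ ∧
      ∀ k : ℕ, 1 ≤ k → ∀ x : ℝ, 0 ≤ x →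
        (((k : ℝ) ≤ α →
            ∫ ω, (if A ω ≤ x then A ω ^ k else 0) ∂P ≤ L₀ x) ∧
         (α < (k : ℝ) →
            ∫ ω, (if A ω ≤ x then A ω ^ k else 0) ∂P ≤
              L₀ x * ((k : ℝ) / ((k : ℝ) - α)) * x ^ ((k : ℝ) - α))) := by
  classical
  set T : ℝ → ℝ := fun s => (P {ω | s ≤ A ω}).toReal with hTdef
  set T' : ℝ → ℝ := fun s => (P {ω | s < A ω}).toReal with hT'def
  have htailT : ∀ s : ℝ, 0 < s → T s = ℓ s * s ^ (-α) := htail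
  have hTnn : ∀ s, 0 ≤ T s := fun s => ENNReal.toReal_nonneg
  have hT1 : ∀ s, T s ≤ 1 := by
    intro s
    have h1 : P {ω | s ≤ A ω} ≤ 1 := prob_le_one
    calc T s ≤ (1 : ℝ≥0∞).toReal := ENNReal.toReal_mono ENNReal.one_ne_top h1
      _ = 1 := by simp
  have hTanti : Antitone T := by
    intro a b hab
    apply ENNReal.toReal_mono (measure_ne_top P _)
    apply measure_mono
    intro ω hω
    exact le_trans hab hω
  have hT'leT : ∀ s, T' s ≤ T s := by
    intro s
    apply ENNReal.toReal_mono (measure_ne_top P _)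
    apply measure_mono
    intro ω hω
    simp only [Set.mem_setOf_eq] at *
    exact le_of_lt hω
  have hT'ge : ∀ s : ℝ, 0 < s → T (2*s) ≤ T' s := by
    intro s hs
    apply ENNReal.toReal_mono (measure_ne_top P _)
    apply measure_mono
    intro ω hω
    exact lt_of_lt_of_le (by linarith : s < 2*s) hω
  have hℓeq : ∀ s : ℝ, 0 < s → ℓ s = s ^ α * T s := by
    intro s hs
    rw [htailT s hs]
    rw [← mul_assoc, mul_comm (s^α) (ℓ s), mul_assoc, ← Real.rpow_add hs]
    simp
  have hℓnn : ∀ s : ℝ, 0 < s → 0 ≤ ℓ s := by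
    intro s hs
    rw [hℓeq s hs]
    exact mul_nonneg (Real.rpow_nonneg hs.le α) (hTnn s)
  have hℓpos : ∀ᶠ x in atTop, 0 < ℓ x := by
    have h11 := hℓ 1 one_pos
    simp only [one_mul] at h11
    have hne := h11.eventually_const_lt (by norm_num : (1:ℝ)/2 < 1)
    filter_upwards [hne, eventually_gt_atTop (0:ℝ)] with x h1 h2
    rcases lt_or_ge 0 (ℓ x) with h | h
    · exact h
    · exfalso
      have : ℓ x = 0 := le_antisymm h (hℓnn x h2)
      rw [this] at h1
      norm_num at h1
  have hTpos : ∀ s, 0 < T s := by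
    intro s
    obtain ⟨y, hy1, hy2⟩ := (hℓpos.and (eventually_ge_atTop (max s 1))).exists
    have hy0 : (0:ℝ) < y := lt_of_lt_of_le one_pos (le_trans (le_max_right s 1) hy2)
    have hTy : T y = ℓ y * y ^ (-α) := htailT y hy0
    have hTypos : 0 < T y := by
      rw [hTy]
      exact mul_pos hy1 (Real.rpow_pos_of_pos hy0 _)
    exact lt_of_lt_of_le hTypos (hTanti (le_trans (le_max_left s 1) hy2))
  have h2T : Tendsto (fun x => T (2*x) / T x) atTop (nhds ((2:ℝ)^(-α))) := by
    have hbase := (hℓ 2 two_pos).const_mul ((2:ℝ)^(-α))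
    rw [mul_one] at hbase
    apply hbase.congr'
    filter_upwards [hℓpos, eventually_gt_atTop (0:ℝ)] with x hℓx hx
    have h2x : (0:ℝ) < 2*x := by linarith
    have e1 : T (2*x) = ℓ (2*x) * ((2:ℝ)^(-α) * x^(-α)) := by
      rw [htailT _ h2x, Real.mul_rpow (by norm_num : (0:ℝ) ≤ 2) hx.le]
    have e2 : T x = ℓ x * x^(-α) := htailT x hx
    rw [e1, e2]
    have hxα : x^(-α) ≠ 0 := ne_of_gt (Real.rpow_pos_of_pos hx _)
    field_simp
  -- truncated moments
  set H : ℕ → ℝ → ℝ := fun k x => ∫ ω, (if A ω ≤ x then A ω ^ k else 0) ∂P with hHdef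
  have hint : ∀ (k : ℕ) (x : ℝ),
      Integrable (fun ω => if A ω ≤ x then A ω ^ k else 0) P := by
    intro k x
    have hmb : Measurable (fun ω => if A ω ≤ x then A ω ^ k else 0) :=
      Measurable.ite (measurableSet_le hmeas measurable_const)
        (hmeas.pow_const k) measurable_const
    apply Integrable.mono' (integrable_const ((max x 0)^k)) hmb.aestronglyMeasurable
    apply ae_of_all
    intro ω
    by_cases h : A ω ≤ x
    · rw [if_pos h]
      rw [Real.norm_eq_abs, abs_of_nonneg (pow_nonneg (hnonneg ω) k)]
      exact pow_le_pow_left₀ (hnonneg ω) (le_max_of_le_left h) k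
    · rw [if_neg h]
      simpa using pow_nonneg (le_max_right x 0) k
  have hHnn : ∀ (k : ℕ) (x : ℝ), 0 ≤ H k x := by
    intro k x
    apply integral_nonneg
    intro ω
    dsimp
    split
    · exact pow_nonneg (hnonneg ω) k
    · exact le_refl 0
  have hHmono : ∀ k : ℕ, Monotone (H k) := by
    intro k a b hab
    apply integral_mono (hint k a) (hint k b)
    intro ω
    dsimp
    by_cases h : A ω ≤ a
    · rw [if_pos h, if_pos (h.trans hab)]
    · rw [if_neg h]
      split
      · exact pow_nonneg (hnonneg ω) k
      · exact le_refl 0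
  have hHub : ∀ (k : ℕ) (x : ℝ), 0 ≤ x → H k x ≤ x^k := by
    intro k x hx
    have h1 : H k x ≤ ∫ _ω, x^k ∂P := by
      apply integral_mono (hint k x) (integrable_const _)
      intro ω
      dsimp
      by_cases h : A ω ≤ x
      · rw [if_pos h]
        exact pow_le_pow_left₀ (hnonneg ω) h k
      · rw [if_neg h]
        exact pow_nonneg hx k
    simpa using h1
  have hM3 : ∀ (k : ℕ) (x y : ℝ), 0 ≤ x → x ≤ y → H k y ≤ H k x + y^k * T x := by
    intro k x y hx hxy
    set S : Set Ω := {ω | x ≤ A ω} with hSdef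
    have hS : MeasurableSet S := hmeas measurableSet_Ici
    have hind : Integrable (S.indicator fun _ => y^k) P :=
      (integrable_const _).indicator hS
    have hpt : ∀ ω, (if A ω ≤ y then A ω ^ k else 0) ≤
        (if A ω ≤ x then A ω ^ k else 0) + S.indicator (fun _ => y^k) ω := by
      intro ω
      have hindnn : 0 ≤ S.indicator (fun _ => y^k) ω := by
        apply Set.indicator_nonneg
        intro _ _
        exact pow_nonneg (le_trans hx hxy) k
      by_cases h1 : A ω ≤ x
      · rw [if_pos h1, if_pos (h1.trans hxy)]
        linarith
      · rw [if_neg h1]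
        have hωS : ω ∈ S := le_of_not_ge h1
        rw [Set.indicator_of_mem hωS]
        by_cases h2 : A ω ≤ y
        · rw [if_pos h2]
          have := pow_le_pow_left₀ (hnonneg ω) h2 k
          linarith
        · rw [if_neg h2]
          have := pow_nonneg (le_trans hx hxy) k
          linarith
    calc H k y ≤ ∫ ω, ((if A ω ≤ x then A ω ^ k else 0) +
          S.indicator (fun _ => y^k) ω) ∂P :=
          integral_mono (hint k y) ((hint k x).add hind) hpt
      _ = H k x + ∫ ω, S.indicator (fun _ => y^k) ω ∂P :=
          integral_add (hint k x) hind
      _ = H k x + y^k * T x := by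
          rw [integral_indicator_const _ hS]
          rw [smul_eq_mul, mul_comm]
          rfl
  have hM4 : ∀ (k : ℕ) (a b : ℝ), 0 < a → a ≤ b →
      a^k * (T' a - T' b) ≤ H k b - H k a := by
    intro k a b ha hab
    set S' : Set Ω := {ω | a < A ω ∧ A ω ≤ b} with hS'def
    have hseteq : S' = {ω | a < A ω} \ {ω | b < A ω} := by
      ext ω
      simp [hS'def, not_lt]
    have hSa : MeasurableSet {ω | a < A ω} := hmeas measurableSet_Ioi
    have hSb : MeasurableSet {ω | b < A ω} := hmeas measurableSet_Ioi
    have hS' : MeasurableSet S' := by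
      rw [hseteq]; exact hSa.diff hSb
    have hsub : {ω | b < A ω} ⊆ {ω | a < A ω} :=
      fun ω hω => lt_of_le_of_lt hab hω
    have hPS' : (P S').toReal = T' a - T' b := by
      rw [hseteq, measure_diff hsub hSb.nullMeasurableSet (measure_ne_top P _)]
      rw [ENNReal.toReal_sub_of_le (measure_mono hsub) (measure_ne_top P _)]
    have hind : Integrable (S'.indicator fun _ => a^k) P :=
      (integrable_const _).indicator hS'
    have hpt : ∀ ω, S'.indicator (fun _ => a^k) ω + (if A ω ≤ a then A ω ^ k else 0) ≤
        (if A ω ≤ b then A ω ^ k else 0) := by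
      intro ω
      by_cases hω : ω ∈ S'
      · rw [Set.indicator_of_mem hω]
        obtain ⟨h1, h2⟩ := hω
        rw [if_neg (not_le.mpr h1), if_pos h2]
        have := pow_le_pow_left₀ ha.le h1.le k
        linarith
      · rw [Set.indicator_of_notMem hω, zero_add]
        by_cases h1 : A ω ≤ a
        · rw [if_pos h1, if_pos (h1.trans hab)]
        · rw [if_neg h1]
          split
          · exact pow_nonneg (hnonneg ω) k
          · exact le_refl 0
    have h1 : ∫ ω, (S'.indicator (fun _ => a^k) ω + (if A ω ≤ a then A ω ^ k else 0)) ∂P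
        ≤ H k b := integral_mono (hind.add (hint k a)) (hint k b) hpt
    rw [integral_add hind (hint k a), integral_indicator_const _ hS'] at h1
    rw [show P.real S' = T' a - T' b from hPS'] at h1
    rw [smul_eq_mul] at h1
    have : (T' a - T' b) * a^k = a^k * (T' a - T' b) := by ring
    linarith [h1]
  have hlow : ∀ k : ℕ, ∀ x : ℝ, 1 ≤ x → T 2 - T x ≤ H k x := by
    intro k x hx
    have h1 := hM4 k 1 x one_pos hx
    rw [one_pow, one_mul] at h1
    have h2 : T 2 ≤ T' 1 := by
      have := hT'ge 1 one_pos
      norm_num at this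
      exact this
    have h3 : T' x ≤ T x := hT'leT x
    have h4 : 0 ≤ H k 1 := hHnn k 1
    linarith
  
  -- running sup of ℓ
  set G : ℝ → ℝ := fun x => sSup (ℓ '' Set.Ioc 0 x) with hGdef
  have hGbdd : ∀ x : ℝ, 0 < x → BddAbove (ℓ '' Set.Ioc 0 x) := by
    intro x hx
    refine ⟨x ^ α, ?_⟩
    rintro y ⟨s, hs, rfl⟩
    calc ℓ s = s ^ α * T s := hℓeq s hs.1
      _ ≤ s ^ α * 1 := mul_le_mul_of_nonneg_left (hT1 s) (Real.rpow_nonneg hs.1.le α)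
      _ = s ^ α := mul_one _
      _ ≤ x ^ α := Real.rpow_le_rpow hs.1.le hs.2 hα.le
  have hGge : ∀ x : ℝ, 0 < x → ∀ s ∈ Set.Ioc (0:ℝ) x, ℓ s ≤ G x := fun x hx s hs =>
    le_csSup (hGbdd x hx) ⟨s, hs, rfl⟩
  have hGnn : ∀ x, 0 ≤ G x := by
    intro x
    apply Real.sSup_nonneg
    rintro y ⟨s, hs, rfl⟩
    exact hℓnn s hs.1
  set C : ℝ := (2:ℝ)^α * (1 + 2/α) with hCdef
  have hCpos : 0 < C := by
    have h1 : (0:ℝ) < (2:ℝ)^α := Real.rpow_pos_of_pos two_pos α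
    have h2 : (0:ℝ) < 2/α := div_pos two_pos hα
    rw [hCdef]
    nlinarith
  set K : ℕ := ⌊α⌋₊ with hKdef
  set L₀ : ℝ → ℝ := fun x => C * G x + ∑ i ∈ Finset.range K, H (i+1) x with hL₀def
  have hsum_nn : ∀ x, 0 ≤ ∑ i ∈ Finset.range K, H (i+1) x :=
    fun x => Finset.sum_nonneg (fun i _ => hHnn (i+1) x)
  have hCGle : ∀ x, C * G x ≤ L₀ x := by
    intro x
    have := hsum_nn x
    rw [hL₀def]
    simp only []
    linarith
  refine ⟨L₀, ?_, ?_⟩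
  · -- slow variation of L₀
    apply slowlyVarying_of_goodSV
    · rw [hL₀def]
      apply GoodSV.add
      · exact (goodSV_sup hα hTanti hT1 hTnn hℓeq hℓ hℓpos).const_mul C hCpos.le
      · apply goodSV_sum
        intro i _hi
        have hik : ((i+1:ℕ):ℝ) ≤ α := by
          have h1 : i+1 ≤ K := Finset.mem_range.mp _hi
          have h2 : (K:ℝ) ≤ α := by
            rw [hKdef]
            exact_mod_cast Nat.floor_le hα.le
          calc ((i+1:ℕ):ℝ) ≤ (K:ℝ) := by exact_mod_cast h1
            _ ≤ α := h2
        rcases lt_or_eq_of_le hik with hlt | heq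
        · exact goodSV_H_lt (i+1) (hHnn (i+1)) (hHmono (i+1)) (hM3 (i+1))
            (hlow (i+1)) (hTpos 2) hTnn
            (tendsto_pow_mul_tail hα hTanti hTpos h2T (i+1) hlt)
        · exact goodSV_H_eq hα (i+1) heq (hHnn (i+1)) (hHmono (i+1)) (hM3 (i+1))
            (hM4 (i+1)) hT'leT hT'ge hℓeq hℓ hℓpos
    · filter_upwards [hℓpos, eventually_ge_atTop (1:ℝ)] with x hℓx hx1
      have hxpos : (0:ℝ) < x := lt_of_lt_of_le one_pos hx1
      have h1 : ℓ x ≤ G x := hGge x hxpos x ⟨hxpos, le_refl x⟩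
      have h2 := hsum_nn x
      have h3 : 0 < C * G x := mul_pos hCpos (lt_of_lt_of_le hℓx h1)
      rw [hL₀def]
      simp only []
      linarith
  · -- the bounds
    intro k hk x hx
    obtain ⟨j, rfl⟩ : ∃ j : ℕ, k = j + 1 := ⟨k - 1, by omega⟩
    constructor
    · -- k ≤ α
      intro hkle
      have hkK : j + 1 ≤ K := by
        rw [hKdef]
        exact Nat.le_floor (by exact_mod_cast hkle)
      have hmem : j ∈ Finset.range K := Finset.mem_range.mpr (by omega)
      have h1 : H (j+1) x ≤ ∑ i ∈ Finset.range K, H (i+1) x :=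
        Finset.single_le_sum (f := fun i => H (i+1) x) (fun i _ => hHnn (i+1) x) hmem
      have h2 : 0 ≤ C * G x := mul_nonneg hCpos.le (hGnn x)
      calc ∫ ω, (if A ω ≤ x then A ω ^ (j+1) else 0) ∂P = H (j+1) x := rfl
        _ ≤ L₀ x := by
            rw [hL₀def]
            simp only []
            linarith
    · -- k > α
      intro hkgt
      rcases eq_or_lt_of_le hx with hx0 | hxpos
      · -- x = 0
        have hx0' : x = 0 := hx0.symm
        subst hx0'
        have hint0 : ∀ ω, (if A ω ≤ (0:ℝ) then A ω ^ (j+1) else 0) = 0 := by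
          intro ω
          by_cases h : A ω ≤ (0:ℝ)
          · rw [if_pos h]
            have hA0 : A ω = 0 := le_antisymm h (hnonneg ω)
            rw [hA0]
            exact zero_pow (by omega)
          · rw [if_neg h]
        have hz : ((j+1:ℕ):ℝ) - α ≠ 0 := by
          have : α < ((j+1:ℕ):ℝ) := hkgt
          intro hcon
          rw [sub_eq_zero] at hcon
          rw [hcon] at this
          exact lt_irrefl _ this
        have hLHS : ∫ ω, (if A ω ≤ (0:ℝ) then A ω ^ (j+1) else 0) ∂P = 0 := by
          simp only [hint0]
          exact integral_zero _ _
        rw [hLHS, Real.zero_rpow hz, mul_zero]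
      · -- x > 0
        
        set β : ℝ := ((j+1:ℕ):ℝ) - α with hβdef
        have hβpos : 0 < β := by
          rw [hβdef]
          have : α < ((j+1:ℕ):ℝ) := hkgt
          linarith
        set r : ℝ := (2:ℝ)⁻¹ with hrdef
        have hrpos : (0:ℝ) < r := by rw [hrdef]; norm_num
        have hrlt1 : r < 1 := by rw [hrdef]; norm_num
        set qq : ℝ := (2:ℝ) ^ (-β) with hqqdef
        have hqqpos : 0 < qq := Real.rpow_pos_of_pos two_pos _
        have hqqlt1 : qq < 1 :=
          Real.rpow_lt_one_of_one_lt_of_neg one_lt_two (by linarith)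
        -- telescoping upper bound
        have htele : ∀ m : ℕ, H (j+1) x ≤
            (∑ i ∈ Finset.range m, (r^i*x)^(j+1) * T (r^(i+1)*x)) + H (j+1) (r^m*x) := by
          intro m
          induction m with
          | zero => simp
          | succ m ih =>
            have hle : r^(m+1)*x ≤ r^m*x := by
              apply mul_le_mul_of_nonneg_right _ hxpos.le
              exact pow_le_pow_of_le_one hrpos.le hrlt1.le (by omega)
            have hpos' : (0:ℝ) ≤ r^(m+1)*x :=
              (mul_pos (pow_pos hrpos (m+1)) hxpos).le
            have hstep := hM3 (j+1) (r^(m+1)*x) (r^m*x) hpos' hle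
            rw [Finset.sum_range_succ]
            linarith [ih, hstep]
        -- bound each term
        have hrinv : r ^ (-α) = (2:ℝ)^α := by
          rw [hrdef, Real.inv_rpow (by norm_num : (0:ℝ) ≤ 2),
            Real.rpow_neg (by norm_num : (0:ℝ) ≤ 2), inv_inv]
        have hrβ : r ^ β = qq := by
          rw [hrdef, hqqdef, Real.inv_rpow (by norm_num : (0:ℝ) ≤ 2),
            Real.rpow_neg (by norm_num : (0:ℝ) ≤ 2)]
        have hterm : ∀ i : ℕ, (r^i*x)^(j+1) * T (r^(i+1)*x) ≤
            G x * ((2:ℝ)^α * (x ^ β * qq^i)) := by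
          intro i
          set y : ℝ := r^i * x with hydef
          have hy : (0:ℝ) < y := mul_pos (pow_pos hrpos i) hxpos
          have hry : (0:ℝ) < r * y := mul_pos hrpos hy
          have hstep1 : r^(i+1)*x = r*y := by rw [hydef]; ring
          have hmemIoc : r*y ∈ Set.Ioc (0:ℝ) x := by
            constructor
            · exact hry
            · rw [← hstep1]
              calc r^(i+1)*x ≤ 1*x := by
                    apply mul_le_mul_of_nonneg_right _ hxpos.le
                    exact pow_le_one₀ hrpos.le hrlt1.le
                _ = x := one_mul x
          have hℓG : ℓ (r*y) ≤ G x := hGge x hxpos _ hmemIoc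
          have hT : T (r^(i+1)*x) = ℓ (r*y) * (r*y)^(-α) := by
            rw [hstep1]
            exact htailT _ hry
          have hE : y^(j+1) * (r*y)^(-α) = (2:ℝ)^α * (y ^ β * y ^ α * y^(-α)) := by
            rw [Real.mul_rpow hrpos.le hy.le, hrinv]
            have h1 : y^(j+1) = y ^ ((j+1:ℕ):ℝ) := (Real.rpow_natCast y (j+1)).symm
            have h2 : y ^ β * y ^ α = y ^ ((j+1:ℕ):ℝ) := by
              rw [← Real.rpow_add hy]
              congr 1
              rw [hβdef]; ring
            rw [h1, ← h2]
            ring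
          have hE2 : y ^ β * y ^ α * y^(-α) = y ^ β := by
            rw [mul_assoc, ← Real.rpow_add hy]
            simp
          have hE3 : y ^ β = qq^i * x ^ β := by
            rw [hydef, Real.mul_rpow (pow_pos hrpos i).le hxpos.le]
            congr 1
            rw [← Real.rpow_natCast r i, ← Real.rpow_mul hrpos.le,
              mul_comm (i:ℝ) β, Real.rpow_mul hrpos.le, hrβ,
              Real.rpow_natCast]
          calc (r^i*x)^(j+1) * T (r^(i+1)*x) = y^(j+1) * (ℓ (r*y) * (r*y)^(-α)) := by
                rw [hT]
            _ ≤ y^(j+1) * (G x * (r*y)^(-α)) := by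
                apply mul_le_mul_of_nonneg_left _ (pow_nonneg hy.le _)
                exact mul_le_mul_of_nonneg_right hℓG (Real.rpow_nonneg hry.le _)
            _ = G x * (y^(j+1) * (r*y)^(-α)) := by ring
            _ = G x * ((2:ℝ)^α * (y ^ β * y ^ α * y^(-α))) := by rw [hE]
            _ = G x * ((2:ℝ)^α * (x ^ β * qq^i)) := by rw [hE2, hE3]; ring_nf
        -- geometric sum bound
        have hgeom : ∀ m : ℕ, (∑ i ∈ Finset.range m, qq^i) ≤ (1 - qq)⁻¹ := by
          intro m
          have hsummable : Summable (fun i : ℕ => qq^i) :=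
            summable_geometric_of_lt_one hqqpos.le hqqlt1
          calc (∑ i ∈ Finset.range m, qq^i) ≤ ∑' i : ℕ, qq^i :=
                hsummable.sum_le_tsum _ (fun i _ => pow_nonneg hqqpos.le i)
            _ = (1 - qq)⁻¹ := tsum_geometric_of_lt_one hqqpos.le hqqlt1
        set D : ℝ := G x * ((2:ℝ)^α * x ^ β) * (1-qq)⁻¹ with hDdef
        have hsum : ∀ m : ℕ,
            (∑ i ∈ Finset.range m, (r^i*x)^(j+1) * T (r^(i+1)*x)) ≤ D := by
          intro m
          calc (∑ i ∈ Finset.range m, (r^i*x)^(j+1) * T (r^(i+1)*x))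
              ≤ ∑ i ∈ Finset.range m, G x * ((2:ℝ)^α * (x ^ β * qq^i)) :=
                Finset.sum_le_sum (fun i _ => hterm i)
            _ = G x * ((2:ℝ)^α * x ^ β) * (∑ i ∈ Finset.range m, qq^i) := by
                rw [Finset.mul_sum]
                apply Finset.sum_congr rfl
                intro i _
                ring
            _ ≤ D := by
                rw [hDdef]
                apply mul_le_mul_of_nonneg_left (hgeom m)
                have h1 := hGnn x
                have h2 : (0:ℝ) ≤ (2:ℝ)^α := (Real.rpow_pos_of_pos two_pos α).le
                have h3 : (0:ℝ) ≤ x ^ β := Real.rpow_nonneg hxpos.le β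
                positivity
        -- pass to the limit
        have hbound : ∀ m : ℕ, H (j+1) x ≤ D + x^(j+1) * (r^(j+1))^m := by
          intro m
          have h1 := htele m
          have h2 := hsum m
          have h3 : H (j+1) (r^m*x) ≤ (r^m*x)^(j+1) :=
            hHub (j+1) _ (mul_pos (pow_pos hrpos m) hxpos).le
          have h4 : (r^m*x)^(j+1) = x^(j+1) * (r^(j+1))^m := by
            rw [mul_pow, ← pow_mul, ← pow_mul, Nat.mul_comm]
            ring
          linarith [h4 ▸ h3]
        have hto : Tendsto (fun m : ℕ => D + x^(j+1) * (r^(j+1))^m) atTop (nhds D) := by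
          have h0 : Tendsto (fun m : ℕ => (r^(j+1))^m) atTop (nhds 0) :=
            tendsto_pow_atTop_nhds_zero_of_lt_one (pow_nonneg hrpos.le _)
              (pow_lt_one₀ hrpos.le hrlt1 (by omega))
          have h1 := (h0.const_mul (x^(j+1))).const_add D
          simpa using h1
        have hfinal : H (j+1) x ≤ D := ge_of_tendsto' hto hbound
        -- numeric comparison
        have hnum : (1 - qq)⁻¹ ≤ (1 + 2/α) * ((β + α)/β) := by
          rw [hqqdef]
          exact numeric_main hα hβpos
        have hβα : β + α = ((j+1:ℕ):ℝ) := by rw [hβdef]; ring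
        have hratio_pos : (0:ℝ) < (β + α)/β := by
          rw [hβα]
          apply div_pos _ hβpos
          exact_mod_cast Nat.succ_pos j
        have hDle : D ≤ (C * G x) * ((β + α)/β) * x ^ β := by
          have h2 : (0:ℝ) ≤ (2:ℝ)^α := (Real.rpow_pos_of_pos two_pos α).le
          have h3 : (0:ℝ) ≤ x ^ β := Real.rpow_nonneg hxpos.le β
          have h1 := hGnn x
          calc D = ((1-qq)⁻¹) * ((2:ℝ)^α * (G x * x ^ β)) := by rw [hDdef]; ring
            _ ≤ ((1 + 2/α) * ((β + α)/β)) * ((2:ℝ)^α * (G x * x ^ β)) := by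
                apply mul_le_mul_of_nonneg_right hnum
                positivity
            _ = (C * G x) * ((β + α)/β) * x ^ β := by rw [hCdef]; ring
        have hLle : (C * G x) * ((β + α)/β) * x ^ β ≤ L₀ x * ((β + α)/β) * x ^ β := by
          apply mul_le_mul_of_nonneg_right _ (Real.rpow_nonneg hxpos.le β)
          exact mul_le_mul_of_nonneg_right (hCGle x) hratio_pos.le
        calc ∫ ω, (if A ω ≤ x then A ω ^ (j+1) else 0) ∂P = H (j+1) x := rfl
          _ ≤ D := hfinal
          _ ≤ (C * G x) * ((β + α)/β) * x ^ β := hDle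
          _ ≤ L₀ x * ((β + α)/β) * x ^ β := hLle
          _ = L₀ x * (((j+1:ℕ):ℝ) / (((j+1:ℕ):ℝ) - α)) * x ^ (((j+1:ℕ):ℝ) - α) := by
              rw [← hβα]
              have hsimp : β + α - α = β := by ring
              rw [hsimp]


end
end
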